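/- Under TRDM, truthful bidding is optimal for any agent who holds the highest valuation in the subtree rooted at itself: let the true valuations v_j ≥ 0 be pairwise distinct, let every agent j ≠ i bid truthfully (b_j = v_j), and suppose v_i = max over {i} ∪ D_i of the true valuations. Then for every bid b_i ≥ 0 that is distinct from all other agents' bids, agent i's TRDM utility when bidding b_i is at most its TRDM utility when bidding its true valuation v_i. -/

import Mathlib

open Classical

/-- A finite directed tree rooted at the seller `s`: every vertex reaches `s`
by iterating the parent map, and the root is its own parent. The agents are
the non-root vertices. -/
structure DiffusionTree (α : Type*) where
  s : α
  parent : α → α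
  parent_s : parent s = s
  reaches_s : ∀ x : α, ∃ n : ℕ, parent^[n] x = s

namespace DiffusionTree

variable {α : Type*} [Fintype α]

/-- The set of agents: all vertices except the seller. -/
noncomputable def agents (T : DiffusionTree α) : Finset α :=
  Finset.univ.filter (fun x => x ≠ T.s)

/-- `T.desc i j` : `j` is a strict descendant of `i`. -/
def desc (T : DiffusionTree α) (i j : α) : Prop :=
  ∃ n : ℕ, 0 < n ∧ T.parent^[n] j = i

/-- `V_{-i}` relative to the active agent set `A`: remove `i` and its descendants. -/
noncomputable def Vminus (T : DiffusionTree α) (A : Finset α) (i : α) : Finset α :=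
  A.filter (fun j => j ≠ i ∧ ¬ T.desc i j)

/-- `b*_S`: the highest bid in `S`, with `b*_∅ = 0`. -/
noncomputable def bstar (b : α → ℝ) (S : Finset α) : ℝ :=
  WithBot.unbotD 0 ((S.image b).max)

/-- Distance from a vertex to the root. -/
noncomputable def depth (T : DiffusionTree α) (x : α) : ℕ :=
  Nat.find (T.reaches_s x)

/-- The vertex `a_j` on the path `s = a_0, a_1, …, a_k = w` from `s` to `w`. -/
noncomputable def pathVx (T : DiffusionTree α) (w : α) (j : ℕ) : α :=
  T.parent^[T.depth w - j] w

/-- TRDM payments, on the active agent set `A`, for bids `b` and winner `w`: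
the winner pays `b*_{V_{-w}}`; an intermediate path agent `a_j` pays
`b*_{V_{-a_j}} − b*_{V_{-a_{j+1}}}`; everyone else pays `0`. -/
noncomputable def payment (T : DiffusionTree α) (A : Finset α) (b : α → ℝ)
    (w : α) (x : α) : ℝ :=
  if x = w then bstar b (T.Vminus A w)
  else if ∃ j : ℕ, 1 ≤ j ∧ j < T.depth w ∧ T.pathVx w j = x then
    bstar b (T.Vminus A x) - bstar b (T.Vminus A (T.pathVx w (T.depth x + 1)))
  else 0

/-- TRDM utility of an agent `i` with true valuation `v`. -/
noncomputable def util (T : DiffusionTree α) (A : Finset α) (b : α → ℝ)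
    (w : α) (v : ℝ) (i : α) : ℝ :=
  (if i = w then v else 0) - T.payment A b w i

end DiffusionTree

open DiffusionTree

section Aux
variable {α : Type*} [Fintype α]

lemma bstar_le (b : α → ℝ) (S : Finset α) (M : ℝ) (hM : 0 ≤ M)
    (h : ∀ x ∈ S, b x ≤ M) : bstar b S ≤ M := by
  unfold bstar
  rcases Finset.eq_empty_or_nonempty S with rfl | hS
  · simpa using hM
  · obtain ⟨m, hm⟩ := Finset.max_of_nonempty (hS.image b)
    rw [hm]
    obtain ⟨x, hx, rfl⟩ := Finset.mem_image.mp (Finset.mem_of_max hm)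
    simpa using h x hx

lemma le_bstar (b : α → ℝ) (S : Finset α) {x : α} (hx : x ∈ S) :
    b x ≤ bstar b S := by
  unfold bstar
  have h := Finset.le_max (Finset.mem_image_of_mem b hx)
  obtain ⟨m, hm⟩ := Finset.max_of_nonempty ((Finset.Nonempty.image ⟨x, hx⟩ b))
  rw [hm] at h ⊢
  exact_mod_cast h

lemma bstar_congr (b b' : α → ℝ) (S : Finset α)
    (h : ∀ x ∈ S, b x = b' x) : bstar b S = bstar b' S := by
  unfold bstar
  rw [Finset.image_congr h]

end Aux

open DiffusionTree in
/-- Under TRDM, truthful bidding is optimal for any agent `i` who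
holds the highest valuation in the subtree rooted at itself: if all other agents
bid truthfully and `v_i = max_{j ∈ {i} ∪ D_i} v_j`, then for every alternative bid
`β ≥ 0` distinct from all other agents' bids, agent `i`'s TRDM utility when bidding
`β` is at most its TRDM utility when bidding `v_i`. -/
theorem trdm_truthful_optimal_for_subtree_max
    {α : Type*} [Fintype α] (T : DiffusionTree α)
    (v : α → ℝ) (hpos : ∀ j ∈ T.agents, 0 ≤ v j)
    (hdist : ∀ j ∈ T.agents, ∀ j' ∈ T.agents, j ≠ j' → v j ≠ v j')
    (i : α) (hi : i ∈ T.agents)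
    (hitop : ∀ j ∈ T.agents, T.desc i j → v j < v i)
    (β : ℝ) (hβ : 0 ≤ β)
    (hβdist : ∀ j ∈ T.agents, j ≠ i → β ≠ v j)
    -- the winner at the truthful profile: the unique highest bidder
    (w : α) (hw : w ∈ T.agents)
    (hwmax : ∀ j ∈ T.agents, j ≠ w → v j < v w)
    -- the winner at the deviated profile where `i` bids `β` instead
    (w' : α) (hw' : w' ∈ T.agents)
    (hw'max : ∀ j ∈ T.agents, j ≠ w' →
      Function.update v i β j < Function.update v i β w') :
    T.util T.agents (Function.update v i β) w' (v i) i
      ≤ T.util T.agents v w (v i) i := by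
  classical
  set b' := Function.update v i β with hb'def
  have hvi0 : 0 ≤ v i := hpos i hi
  have hb'ne : ∀ j : α, j ≠ i → b' j = v j := fun j h => Function.update_of_ne h _ _
  have hVmi : bstar b' (T.Vminus T.agents i) = bstar v (T.Vminus T.agents i) :=
    bstar_congr _ _ _ (fun x hx => hb'ne x (Finset.mem_filter.mp hx).2.1)
  by_cases hwi : w = i
  · -- Case A : i wins at the truthful profile
    subst hwi
    have htruth : T.util T.agents v w (v w) w
        = v w - bstar v (T.Vminus T.agents w) := by
      simp [util, payment]
    rw [htruth]
    by_cases hw'i : w' = w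
    · -- i also wins after deviating: identical utility
      subst hw'i
      have hdev : T.util T.agents b' w' (v w') w'
          = v w' - bstar b' (T.Vminus T.agents w') := by
        simp [util, payment]
      rw [hdev, hVmi]
    · -- someone else wins after deviating
      have hb'w' : b' w' = v w' := hb'ne w' hw'i
      have hw'ne : w ≠ w' := fun h => hw'i h.symm
      have hiw' : ¬ (w = w') := hw'ne
      simp only [util, payment, if_neg hiw']
      by_cases hpath : ∃ j : ℕ, 1 ≤ j ∧ j < T.depth w' ∧ T.pathVx w' j = w
      · rw [if_pos hpath]
        obtain ⟨j, hj1, hj2, hj3⟩ := hpath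
        have hdesc : T.desc w w' := ⟨T.depth w' - j, by omega, hj3⟩
        have hlt : v w' < v w := hitop w' hw' hdesc
        have hc : bstar b' (T.Vminus T.agents (T.pathVx w' (T.depth w + 1))) ≤ v w := by
          apply bstar_le _ _ _ (hpos w hw)
          intro x hx
          have hxA : x ∈ T.agents := (Finset.mem_filter.mp hx).1
          by_cases hxw' : x = w'
          · rw [hxw', hb'w']; linarith
          · have := hw'max x hxA hxw'
            rw [hb'w'] at this
            linarith
        rw [hVmi]
        linarith
      · rw [if_neg hpath]
        have hub : bstar v (T.Vminus T.agents w) ≤ v w := by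
          apply bstar_le _ _ _ (hpos w hw)
          intro x hx
          obtain ⟨hxA, hxw, -⟩ := Finset.mem_filter.mp hx
          exact (hwmax x hxA hxw).le
        simp only [sub_zero]
        linarith
  · -- Case B : i does not win at the truthful profile
    have hviw : v i < v w := hwmax i hi (fun h => hwi h.symm)
    have hiw : i ≠ w := fun h => hwi h.symm
    have hnopathw : ¬ ∃ j : ℕ, 1 ≤ j ∧ j < T.depth w ∧ T.pathVx w j = i := by
      rintro ⟨j, hj1, hj2, hj3⟩
      have hdesc : T.desc i w := ⟨T.depth w - j, by omega, hj3⟩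
      exact absurd (hitop w hw hdesc) (by linarith)
    have htruth : T.util T.agents v w (v i) i = 0 := by
      simp only [util, payment, if_neg hiw, if_neg hnopathw]
      ring
    rw [htruth]
    by_cases hw'i : w' = i
    · -- i wins after deviating: pays at least v w > v i
      subst hw'i
      have hwV : w ∈ T.Vminus T.agents w' := by
        refine Finset.mem_filter.mpr ⟨hw, hwi, fun hd => ?_⟩
        exact absurd (hitop w hw hd) (by linarith)
      have hb : v w ≤ bstar v (T.Vminus T.agents w') := le_bstar v _ hwV
      have hdev : T.util T.agents b' w' (v w') w'
          = v w' - bstar b' (T.Vminus T.agents w') := by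
        simp [util, payment]
      rw [hdev, hVmi]
      linarith
    · -- someone else wins after deviating and i is not on the path
      have hnopathw' : ¬ ∃ j : ℕ, 1 ≤ j ∧ j < T.depth w' ∧ T.pathVx w' j = i := by
        rintro ⟨j, hj1, hj2, hj3⟩
        have hdesc : T.desc i w' := ⟨T.depth w' - j, by omega, hj3⟩
        have hlt : v w' < v i := hitop w' hw' hdesc
        by_cases hww' : w = w'
        · subst hww'; linarith
        · have h1 := hw'max w hw hww'
          rw [hb'ne w hwi, hb'ne w' hw'i] at h1
          linarith
      have hiw' : i ≠ w' := fun h => hw'i h.symm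
      simp only [util, payment, if_neg hiw', if_neg hnopathw']
      ring_nf
      simp
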